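/- Assume p = 2. Then for every integer U ≥ 1: if U is even, W(qU+1) = W(U) + W(qU/2 − 1), and if U is odd, W(qU+1) = W(U) + W((qU+1)/2). -/

import Mathlib

/-- A strictly chained `(p,q)`-ary partition of `U`: a finite strictly decreasing
list of positive integers of the form `p^a * q^b`, each part divisible by the next,
summing to `U`. -/
def IsSCPartition (p q U : ℕ) (l : List ℕ) : Prop :=
  (∀ x ∈ l, ∃ a b : ℕ, x = p ^ a * q ^ b) ∧
  List.Chain' (fun x y => y ∣ x ∧ y < x) l ∧
  l.sum = U

/-- The set of strictly chained `(p,q)`-ary partitions of `U`. -/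
def Omega (p q U : ℕ) : Set (List ℕ) := {l | IsSCPartition p q U l}

/-- The subset of `Omega p q U` of partitions with no part equal to `1`. -/
def OmegaStar (p q U : ℕ) : Set (List ℕ) := {l | IsSCPartition p q U l ∧ 1 ∉ l}

/-- `W p q U` is the number of strictly chained `(p,q)`-ary partitions of `U`. -/
noncomputable def W (p q U : ℕ) : ℕ := (Omega p q U).ncard

/-- `Wstar p q U` is the number of strictly chained `(p,q)`-ary partitions of `U`
with no part equal to `1`. -/
noncomputable def Wstar (p q U : ℕ) : ℕ := (OmegaStar p q U).ncard

namespace SCAux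

/-- Partitions with odd smallest (= last) part. -/
def OmegaO (q U : ℕ) : Set (List ℕ) :=
  {l | IsSCPartition 2 q U l ∧ ∀ x ∈ l.getLast?, ¬ 2 ∣ x}

noncomputable def WO (q U : ℕ) : ℕ := (OmegaO q U).ncard

/-- partitions with no part 1 and even last part -/
def Cset (q U : ℕ) : Set (List ℕ) :=
  {l | IsSCPartition 2 q U l ∧ 1 ∉ l ∧ ∀ x ∈ l.getLast?, 2 ∣ x}

/-- partitions with no part 1 and odd last part -/
def Dset (q U : ℕ) : Set (List ℕ) :=
  {l | IsSCPartition 2 q U l ∧ 1 ∉ l ∧ ∀ x ∈ l.getLast?, ¬ 2 ∣ x}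

abbrev R : ℕ → ℕ → Prop := fun x y => y ∣ x ∧ y < x

lemma R_trans : Transitive R := fun _ _ _ h1 h2 => ⟨h2.1.trans h1.1, h2.2.trans h1.2⟩

instance : IsTrans ℕ R := ⟨R_trans⟩

lemma chain_pairwise {l : List ℕ} (h : List.Chain' R l) : l.Pairwise R :=
  List.isChain_iff_pairwise.mp h

section
variable {q : ℕ}

lemma part_pos (hq : 1 < q) {x : ℕ} (hx : ∃ a b : ℕ, x = 2 ^ a * q ^ b) : 0 < x := by
  obtain ⟨a, b, rfl⟩ := hx
  exact Nat.mul_pos (pow_pos (by norm_num) _) (pow_pos (lt_trans one_pos hq) _)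

lemma last_rel {l : List ℕ} (h : List.Chain' R l) {m : ℕ} (hm : m ∈ l.getLast?) :
    ∀ x ∈ l, x = m ∨ R x m := by
  intro x hx
  have hl : l ≠ [] := by rintro rfl; simp at hm
  have hd : l.dropLast ++ [m] = l := List.dropLast_append_getLast? _ hm
  have hp : l.Pairwise R := chain_pairwise h
  rw [← hd] at hp hx
  rcases List.mem_append.mp hx with h1 | h1
  · exact Or.inr ((List.pairwise_append.mp hp).2.2 x h1 m (by simp))
  · simp at h1; exact Or.inl h1

lemma last_dvd {l : List ℕ} (h : List.Chain' R l) {m : ℕ} (hm : m ∈ l.getLast?) :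
    ∀ x ∈ l, m ∣ x := by
  intro x hx
  rcases last_rel h hm x hx with h1 | h1
  · exact h1 ▸ dvd_refl m
  · exact h1.1

lemma last_dvd_sum {l : List ℕ} (h : List.Chain' R l) {m : ℕ} (hm : m ∈ l.getLast?) :
    m ∣ l.sum :=
  List.dvd_sum (last_dvd h hm)

/-- if `1 ∈ l` then the last entry is 1 -/
lemma last_eq_one {l : List ℕ} (h : List.Chain' R l) (h1 : 1 ∈ l) :
    l.getLast? = some 1 := by
  have hl : l ≠ [] := by rintro rfl; simp at h1
  obtain ⟨m, hm⟩ := Option.isSome_iff_exists.mp (List.getLast?_isSome.mpr hl)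
  rcases last_rel h hm 1 h1 with h2 | h2
  · rw [hm, h2]
  · have := Nat.dvd_one.mp h2.1
    have := h2.2
    omega

end

end SCAux

namespace SCAux

variable {q : ℕ}

lemma mem_of_getLast? {l : List ℕ} {x : ℕ} (h : x ∈ l.getLast?) : x ∈ l := by
  obtain ⟨hne, rfl⟩ := List.mem_getLast?_eq_getLast h
  exact List.getLast_mem hne

lemma sorted_gt {l : List ℕ} (h : List.Chain' R l) : l.Pairwise (· > ·) :=
  (chain_pairwise h).imp fun h => h.2

lemma omega_finite (N : ℕ) : (Omega 2 q N).Finite := by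
  have hinj : Set.InjOn (fun l : List ℕ => l.toFinset) (Omega 2 q N) := by
    intro l1 h1 l2 h2 he
    have s1 := sorted_gt h1.2.1
    have s2 := sorted_gt h2.2.1
    exact List.Perm.eq_of_pairwise (fun a b _ _ h1 h2 => absurd (lt_trans h1 h2) (lt_irrefl _))
      s1 s2 (List.perm_of_nodup_nodup_toFinset_eq s1.nodup s2.nodup he)
  apply Set.Finite.of_finite_image _ hinj
  apply Set.Finite.subset ((Finset.range (N + 1)).powerset.finite_toSet)
  rintro s ⟨l, hl, rfl⟩
  simp only [Finset.coe_powerset, Set.mem_preimage, Set.mem_powerset_iff,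
    Finset.coe_range]
  intro x hx
  simp only [List.coe_toFinset, Set.mem_setOf_eq] at hx
  have hxs : x ≤ l.sum := List.single_le_sum (fun _ _ => Nat.zero_le _) x hx
  have hsum : l.sum = N := hl.2.2
  exact Nat.lt_succ_of_le (le_of_le_of_eq hxs hsum)

lemma omegaStar_subset (N : ℕ) : OmegaStar 2 q N ⊆ Omega 2 q N := fun _ h => h.1
lemma omegaO_subset (N : ℕ) : OmegaO q N ⊆ Omega 2 q N := fun _ h => h.1
lemma cset_subset (N : ℕ) : Cset q N ⊆ Omega 2 q N := fun _ h => h.1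
lemma dset_subset (N : ℕ) : Dset q N ⊆ Omega 2 q N := fun _ h => h.1

/-- S0: partitions of N containing 1 are exactly (partition of N-1 with no 1) ++ [1]. -/
lemma image_app_eq (hq : 1 < q) {N : ℕ} (hN : 1 ≤ N) :
    (fun m : List ℕ => m ++ [1]) '' OmegaStar 2 q (N - 1)
      = {l | l ∈ Omega 2 q N ∧ 1 ∈ l} := by
  ext l
  constructor
  · rintro ⟨m, ⟨⟨hf, hc, hs⟩, h1⟩, rfl⟩
    refine ⟨⟨?_, ?_, ?_⟩, by simp⟩
    · intro x hx
      rcases List.mem_append.mp hx with hx | hx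
      · exact hf x hx
      · simp only [List.mem_singleton] at hx
        exact ⟨0, 0, by simp [hx]⟩
    · unfold List.Chain'; rw [List.isChain_append]
      refine ⟨hc, List.isChain_singleton _, ?_⟩
      intro x hx y hy
      simp only [List.head?_cons, Option.mem_some_iff] at hy
      subst hy
      have hxl : x ∈ m := mem_of_getLast? hx
      have hx0 : 0 < x := part_pos hq (hf x hxl)
      have hx1 : x ≠ 1 := fun h => h1 (h ▸ hxl)
      exact ⟨one_dvd _, by omega⟩
    · simp only [List.sum_append, List.sum_cons, List.sum_nil]
      omega
  · rintro ⟨⟨hf, hc, hs⟩, h1⟩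
    have hl := last_eq_one hc h1
    have hne : l ≠ [] := by rintro rfl; simp at h1
    have hd : l.dropLast ++ [1] = l :=
      List.dropLast_append_getLast? _ (Option.mem_def.mpr hl)
    have hsum : l.dropLast.sum + 1 = N := by
      rw [← hd, List.sum_append] at hs; simpa using hs
    refine ⟨l.dropLast, ⟨⟨?_, ?_, ?_⟩, ?_⟩, hd⟩
    · intro x hx; exact hf x (List.mem_of_mem_dropLast hx)
    · rw [← hd] at hc; exact (List.isChain_append.mp hc).1
    · omega
    · intro hmem
      have hp := chain_pairwise hc
      rw [← hd] at hp
      have := (List.pairwise_append.mp hp).2.2 1 hmem 1 (by simp)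
      exact absurd this.2 (lt_irrefl 1)

lemma sum_map_mul (c : ℕ) (l : List ℕ) : (l.map (fun x => c * x)).sum = c * l.sum := by
  induction l with
  | nil => simp
  | cons x t ih => simp [ih, Nat.mul_add]

end SCAux

namespace SCAux

variable {q : ℕ}

lemma form_div_two (hq2 : Nat.Coprime 2 q) {x : ℕ}
    (hx : ∃ a b : ℕ, x = 2 ^ a * q ^ b) (h2 : 2 ∣ x) :
    x = 2 * (x / 2) ∧ ∃ a b : ℕ, x / 2 = 2 ^ a * q ^ b := by
  obtain ⟨a, b, rfl⟩ := hx
  cases a with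
  | zero =>
    simp only [pow_zero, one_mul] at h2
    have := (hq2.pow_right b).eq_one_of_dvd h2
    omega
  | succ a =>
    have h : 2 ^ (a + 1) * q ^ b = 2 * (2 ^ a * q ^ b) := by ring
    rw [h, Nat.mul_div_cancel_left _ (by norm_num)]
    exact ⟨rfl, a, b, rfl⟩

lemma form_div_q (hq : 1 < q) (hq2 : Nat.Coprime 2 q) {x : ℕ}
    (hx : ∃ a b : ℕ, x = 2 ^ a * q ^ b) (h2 : q ∣ x) :
    x = q * (x / q) ∧ ∃ a b : ℕ, x / q = 2 ^ a * q ^ b := by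
  obtain ⟨a, b, rfl⟩ := hx
  cases b with
  | zero =>
    simp only [pow_zero, mul_one] at h2
    have := ((hq2.symm).pow_right a).eq_one_of_dvd h2
    omega
  | succ b =>
    have h : 2 ^ a * q ^ (b + 1) = q * (2 ^ a * q ^ b) := by ring
    rw [h, Nat.mul_div_cancel_left _ (by omega)]
    exact ⟨rfl, a, b, rfl⟩

/-- the last part of a member of `Dset` is divisible by `q`. -/
lemma dset_last_q_dvd (hq : 1 < q) (hq2 : Nat.Coprime 2 q) {N : ℕ} {l : List ℕ}
    (hl : l ∈ Dset q N) {m : ℕ} (hm : m ∈ l.getLast?) : q ∣ m := by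
  obtain ⟨⟨hf, hc, hs⟩, h1, hodd⟩ := hl
  have hml : m ∈ l := mem_of_getLast? hm
  obtain ⟨a, b, hab⟩ := hf m hml
  have ha : a = 0 := by
    by_contra h
    exact hodd m hm (hab ▸ Dvd.dvd.mul_right (dvd_pow_self 2 h) _)
  have hb : b ≠ 0 := by
    rintro rfl
    apply h1
    have hm1 : m = 1 := by rw [hab, ha]; simp
    exact hm1 ▸ hml
  rw [hab, ha]
  simpa using dvd_pow_self q hb

lemma Cset_eq (hq : 1 < q) (hq2 : Nat.Coprime 2 q) {N : ℕ} (hN : 1 ≤ N) (h2 : 2 ∣ N) :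
    Cset q N = (fun l : List ℕ => l.map (fun x => 2 * x)) '' Omega 2 q (N / 2) := by
  ext l
  constructor
  · rintro ⟨⟨hf, hc, hs⟩, h1, hlast⟩
    have hne : l ≠ [] := by rintro rfl; simp at hs; omega
    obtain ⟨m0, hm0⟩ := Option.isSome_iff_exists.mp (List.getLast?_isSome.mpr hne)
    have hall : ∀ x ∈ l, 2 ∣ x := fun x hx => (hlast m0 hm0).trans (last_dvd hc hm0 x hx)
    have hrec : (l.map (fun x => x / 2)).map (fun x => 2 * x) = l := by
      rw [List.map_map]
      have : l.map ((fun x => 2 * x) ∘ fun x => x / 2) = l.map id := by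
        apply List.map_congr_left
        intro x hx
        have := hall x hx
        simp only [Function.comp_apply, id_eq]
        omega
      simpa using this
    refine ⟨l.map (fun x => x / 2), ⟨?_, ?_, ?_⟩, hrec⟩
    · intro x hx
      obtain ⟨y, hy, rfl⟩ := List.mem_map.mp hx
      exact (form_div_two hq2 (hf y hy) (hall y hy)).2
    · unfold List.Chain' at hc ⊢; rw [← hrec, List.isChain_map] at hc
      refine hc.imp ?_
      intro a b hab
      exact ⟨(mul_dvd_mul_iff_left (two_ne_zero)).mp hab.1, by have := hab.2; omega⟩
    · have : l.sum = 2 * (l.map (fun x => x / 2)).sum := by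
        conv_lhs => rw [← hrec]
        rw [sum_map_mul]
      omega
  · rintro ⟨m, ⟨hf, hc, hs⟩, rfl⟩
    refine ⟨⟨?_, ?_, ?_⟩, ?_, ?_⟩
    · intro x hx
      obtain ⟨y, hy, rfl⟩ := List.mem_map.mp hx
      obtain ⟨a, b, rfl⟩ := hf y hy
      exact ⟨a + 1, b, by ring⟩
    · unfold List.Chain'; rw [List.isChain_map]
      exact hc.imp fun {a b} hab => ⟨mul_dvd_mul_left 2 hab.1, by have := hab.2; omega⟩
    · rw [sum_map_mul, hs, Nat.mul_div_cancel' h2]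
    · intro hmem
      obtain ⟨y, _, hy⟩ := List.mem_map.mp hmem
      omega
    · intro x hx
      rw [List.getLast?_map] at hx
      obtain ⟨y, _, rfl⟩ := Option.mem_map.mp hx
      exact Dvd.intro y rfl

lemma Cset_empty (hq : 1 < q) {N : ℕ} (h2 : ¬ 2 ∣ N) : Cset q N = ∅ := by
  ext l
  simp only [Set.mem_empty_iff_false, iff_false]
  rintro ⟨⟨hf, hc, hs⟩, h1, hlast⟩
  have hN : N ≠ 0 := by rintro rfl; exact h2 ⟨0, rfl⟩
  have hne : l ≠ [] := by rintro rfl; simp at hs; omega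
  obtain ⟨m0, hm0⟩ := Option.isSome_iff_exists.mp (List.getLast?_isSome.mpr hne)
  exact h2 (hs ▸ ((hlast m0 hm0).trans (last_dvd_sum hc hm0)))

lemma Dset_eq (hq : 1 < q) (hq2 : Nat.Coprime 2 q) {N : ℕ} (hN : 1 ≤ N) (hqd : q ∣ N) :
    Dset q N = (fun l : List ℕ => l.map (fun x => q * x)) '' OmegaO q (N / q) := by
  have hq0 : 0 < q := by omega
  ext l
  constructor
  · rintro hD
    obtain ⟨⟨hf, hc, hs⟩, h1, hlast⟩ := hD
    have hne : l ≠ [] := by rintro rfl; simp at hs; omega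
    obtain ⟨m0, hm0⟩ := Option.isSome_iff_exists.mp (List.getLast?_isSome.mpr hne)
    have hqm0 : q ∣ m0 := dset_last_q_dvd hq hq2 ⟨⟨hf, hc, hs⟩, h1, hlast⟩ hm0
    have hall : ∀ x ∈ l, q ∣ x := fun x hx => hqm0.trans (last_dvd hc hm0 x hx)
    have hrec : (l.map (fun x => x / q)).map (fun x => q * x) = l := by
      rw [List.map_map]
      have : l.map ((fun x => q * x) ∘ fun x => x / q) = l.map id := by
        apply List.map_congr_left
        intro x hx
        simp only [Function.comp_apply, id_eq]
        exact (Nat.mul_div_cancel' (hall x hx))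
      simpa using this
    refine ⟨l.map (fun x => x / q), ⟨⟨?_, ?_, ?_⟩, ?_⟩, hrec⟩
    · intro x hx
      obtain ⟨y, hy, rfl⟩ := List.mem_map.mp hx
      exact (form_div_q hq hq2 (hf y hy) (hall y hy)).2
    · unfold List.Chain' at hc ⊢; rw [← hrec, List.isChain_map] at hc
      refine hc.imp ?_
      intro a b hab
      exact ⟨(mul_dvd_mul_iff_left (by omega : q ≠ 0)).mp hab.1,
        lt_of_mul_lt_mul_left hab.2 (Nat.zero_le q)⟩
    · have h' : l.sum = q * (l.map (fun x => x / q)).sum := by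
        conv_lhs => rw [← hrec]
        rw [sum_map_mul]
      rw [hs] at h'
      rw [h', Nat.mul_div_cancel_left _ hq0]
    · intro x hx
      rw [List.getLast?_map] at hx
      obtain ⟨y, hy, rfl⟩ := Option.mem_map.mp hx
      intro h2y
      have hyl : y ∈ l := mem_of_getLast? hy
      have hqy : q ∣ y := hall y hyl
      have h2 : 2 ∣ y := by
        have := h2y.mul_left q
        rwa [Nat.mul_div_cancel' hqy] at this
      exact hlast y hy h2
  · rintro ⟨m, ⟨⟨hf, hc, hs⟩, hodd⟩, rfl⟩
    refine ⟨⟨?_, ?_, ?_⟩, ?_, ?_⟩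
    · intro x hx
      obtain ⟨y, hy, rfl⟩ := List.mem_map.mp hx
      obtain ⟨a, b, rfl⟩ := hf y hy
      exact ⟨a, b + 1, by ring⟩
    · unfold List.Chain'; rw [List.isChain_map]
      exact hc.imp fun {a b} hab =>
        ⟨mul_dvd_mul_left q hab.1, (Nat.mul_lt_mul_left hq0).mpr hab.2⟩
    · rw [sum_map_mul, hs, Nat.mul_div_cancel' hqd]
    · intro hmem
      obtain ⟨y, _, hy⟩ := List.mem_map.mp hmem
      have : q * y = 1 := hy
      have : q ∣ 1 := Dvd.intro y this
      have := Nat.dvd_one.mp this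
      omega
    · intro x hx
      rw [List.getLast?_map] at hx
      obtain ⟨y, hy, rfl⟩ := Option.mem_map.mp hx
      intro h2
      exact hodd y hy (hq2.dvd_of_dvd_mul_left h2)

lemma Dset_empty (hq : 1 < q) (hq2 : Nat.Coprime 2 q) {N : ℕ} (hqd : ¬ q ∣ N) :
    Dset q N = ∅ := by
  ext l
  simp only [Set.mem_empty_iff_false, iff_false]
  intro hD
  obtain ⟨⟨hf, hc, hs⟩, h1, hlast⟩ := hD
  have hN : N ≠ 0 := by rintro rfl; exact hqd ⟨0, rfl⟩
  have hne : l ≠ [] := by rintro rfl; simp at hs; omega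
  obtain ⟨m0, hm0⟩ := Option.isSome_iff_exists.mp (List.getLast?_isSome.mpr hne)
  have hqm0 : q ∣ m0 := dset_last_q_dvd hq hq2 ⟨⟨hf, hc, hs⟩, h1, hlast⟩ hm0
  exact hqd (hs ▸ (hqm0.trans (last_dvd_sum hc hm0)))

end SCAux

namespace SCAux

variable {q : ℕ}

lemma omega_split (hq : 1 < q) {N : ℕ} (hN : 1 ≤ N) :
    Omega 2 q N
      = ((fun m : List ℕ => m ++ [1]) '' OmegaStar 2 q (N - 1)) ∪ OmegaStar 2 q N := by
  rw [image_app_eq hq hN]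
  ext l
  constructor
  · intro hl
    by_cases h1 : 1 ∈ l
    · exact Or.inl ⟨hl, h1⟩
    · exact Or.inr ⟨hl, h1⟩
  · rintro (⟨hl, _⟩ | ⟨hl, _⟩) <;> exact hl

lemma omegaO_split (hq : 1 < q) {N : ℕ} (hN : 1 ≤ N) :
    OmegaO q N
      = ((fun m : List ℕ => m ++ [1]) '' OmegaStar 2 q (N - 1)) ∪ Dset q N := by
  rw [image_app_eq hq hN]
  ext l
  constructor
  · rintro ⟨hl, hodd⟩
    by_cases h1 : 1 ∈ l
    · exact Or.inl ⟨hl, h1⟩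
    · exact Or.inr ⟨hl, h1, hodd⟩
  · rintro (⟨hl, h1⟩ | ⟨hl, h1, hodd⟩)
    · refine ⟨hl, ?_⟩
      intro x hx
      rw [last_eq_one hl.2.1 h1] at hx
      simp only [Option.mem_some_iff] at hx
      subst hx
      omega
    · exact ⟨hl, hodd⟩

lemma omegaStar_split (hq : 1 < q) {N : ℕ} (hN : 1 ≤ N) :
    OmegaStar 2 q N = Cset q N ∪ Dset q N := by
  ext l
  constructor
  · rintro ⟨hl, h1⟩
    have hne : l ≠ [] := by
      rintro rfl
      have := hl.2.2
      simp at this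
      omega
    obtain ⟨m0, hm0⟩ := Option.isSome_iff_exists.mp (List.getLast?_isSome.mpr hne)
    by_cases he : 2 ∣ m0
    · refine Or.inl ⟨hl, h1, ?_⟩
      intro x hx
      rw [hm0] at hx
      simp only [Option.mem_some_iff] at hx
      exact hx ▸ he
    · refine Or.inr ⟨hl, h1, ?_⟩
      intro x hx
      rw [hm0] at hx
      simp only [Option.mem_some_iff] at hx
      exact hx ▸ he
  · rintro (⟨hl, h1, _⟩ | ⟨hl, h1, _⟩) <;> exact ⟨hl, h1⟩

lemma app_inj : Function.Injective (fun m : List ℕ => m ++ [1]) :=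
  List.append_left_injective [1]

lemma disj_app_star (S : Set (List ℕ)) :
    Disjoint ((fun m : List ℕ => m ++ [1]) '' S) {l : List ℕ | 1 ∉ l} := by
  rw [Set.disjoint_left]
  rintro l ⟨m, _, rfl⟩ h
  exact h (by simp)

lemma ncard_union_app (hq : 1 < q) {N : ℕ} (S : Set (List ℕ))
    (hS : S ⊆ {l : List ℕ | 1 ∉ l}) (hfin : S.Finite) :
    (((fun m : List ℕ => m ++ [1]) '' OmegaStar 2 q (N - 1)) ∪ S).ncard
      = Wstar 2 q (N - 1) + S.ncard := by
  rw [Set.ncard_union_eq (Set.disjoint_of_subset_right hS (disj_app_star _))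
    (((omega_finite (N-1)).subset (omegaStar_subset _)).image _) hfin]
  congr 1
  exact Set.ncard_image_of_injective _ app_inj

/-- E1 -/
lemma A1 (hq : 1 < q) {N : ℕ} (hN : 1 ≤ N) :
    W 2 q N = Wstar 2 q (N - 1) + Wstar 2 q N := by
  rw [W, omega_split hq hN,
    ncard_union_app hq _ (fun l hl => hl.2) ((omega_finite N).subset (omegaStar_subset _))]
  rfl

/-- E3 -/
lemma A3 (hq : 1 < q) (hq2 : Nat.Coprime 2 q) {N : ℕ} (hN : 1 ≤ N) :
    WO q N = Wstar 2 q (N - 1) + (if q ∣ N then WO q (N / q) else 0) := by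
  rw [WO, omegaO_split hq hN,
    ncard_union_app hq _ (fun l hl => hl.2.1) ((omega_finite N).subset (dset_subset _))]
  congr 1
  by_cases hqd : q ∣ N
  · rw [if_pos hqd, Dset_eq hq hq2 hN hqd,
      Set.ncard_image_of_injective _ (List.map_injective_iff.mpr
        (fun a b h => Nat.eq_of_mul_eq_mul_left (by omega) h))]
    rfl
  · rw [if_neg hqd, Dset_empty hq hq2 hqd]
    simp

/-- E2 -/
lemma A2 (hq : 1 < q) (hq2 : Nat.Coprime 2 q) {N : ℕ} (hN : 1 ≤ N) :
    Wstar 2 q N = (if 2 ∣ N then W 2 q (N / 2) else 0)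
      + (if q ∣ N then WO q (N / q) else 0) := by
  have hq0 : q ≠ 0 := by omega
  rw [Wstar, omegaStar_split hq hN]
  have hdisj : Disjoint (Cset q N) (Dset q N) := by
    rw [Set.disjoint_left]
    rintro l ⟨hl, h1, hev⟩ ⟨_, _, hodd⟩
    have hne : l ≠ [] := by
      rintro rfl
      have := hl.2.2
      simp at this
      omega
    obtain ⟨m0, hm0⟩ := Option.isSome_iff_exists.mp (List.getLast?_isSome.mpr hne)
    exact hodd m0 hm0 (hev m0 hm0)
  rw [Set.ncard_union_eq hdisj ((omega_finite N).subset (cset_subset _))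
    ((omega_finite N).subset (dset_subset _))]
  congr 1
  · by_cases h2 : 2 ∣ N
    · rw [if_pos h2, Cset_eq hq hq2 hN h2,
        Set.ncard_image_of_injective _ (List.map_injective_iff.mpr (fun a b h => by omega))]
      rfl
    · rw [if_neg h2, Cset_empty hq h2]
      simp
  · by_cases hqd : q ∣ N
    · rw [if_pos hqd, Dset_eq hq hq2 hN hqd,
        Set.ncard_image_of_injective _ (List.map_injective_iff.mpr
          (fun a b h => Nat.eq_of_mul_eq_mul_left (by omega) h))]
      rfl
    · rw [if_neg hqd, Dset_empty hq hq2 hqd]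
      simp

lemma Wstar_zero (hq : 1 < q) : Wstar 2 q 0 = 1 := by
  have : OmegaStar 2 q 0 = {([] : List ℕ)} := by
    ext l
    constructor
    · rintro ⟨⟨hf, _, hs⟩, _⟩
      have : ∀ x ∈ l, 0 < x := fun x hx => part_pos hq (hf x hx)
      cases l with
      | nil => rfl
      | cons x t =>
        simp only [List.sum_cons] at hs
        have := this x (by simp)
        omega
    · rintro rfl
      exact ⟨⟨by simp, List.isChain_nil, rfl⟩, by simp⟩
  rw [Wstar, this, Set.ncard_singleton]

end SCAux

namespace SCAux

variable {q : ℕ}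

lemma q_odd (hq : 1 < q) (hq2 : Nat.Coprime 2 q) : ¬ 2 ∣ q := fun h => by
  have := hq2.eq_one_of_dvd h
  omega

lemma not_two_dvd_mul (hq : 1 < q) (hq2 : Nat.Coprime 2 q) {U : ℕ} (hU : ¬ 2 ∣ U) :
    ¬ 2 ∣ q * U := by
  intro h
  rcases (Nat.Prime.dvd_mul Nat.prime_two).mp h with h | h
  · exact q_odd hq hq2 h
  · exact hU h

lemma not_q_dvd_succ (hq : 1 < q) {U : ℕ} : ¬ q ∣ q * U + 1 := by
  intro h
  have h1 : q ∣ 1 := (Nat.dvd_add_right ⟨U, rfl⟩).mp h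
  have := Nat.dvd_one.mp h1
  omega

lemma not_q_dvd_sub_two (hq : 1 < q) (hq2 : Nat.Coprime 2 q) {U : ℕ} (hU : 1 ≤ U) :
    ¬ q ∣ q * U - 2 := by
  intro h
  have hge : q ≤ q * U := Nat.le_mul_of_pos_right q (by omega)
  have h2 : q ∣ q * U - (q * U - 2) := Nat.dvd_sub ⟨U, rfl⟩ h
  rw [show q * U - (q * U - 2) = 2 from by omega] at h2
  have := Nat.le_of_dvd (by norm_num) h2
  have := q_odd hq hq2
  omega

/-- for odd V, WO V = W V -/
lemma A4 (hq : 1 < q) (hq2 : Nat.Coprime 2 q) {V : ℕ} (hV : ¬ 2 ∣ V) :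
    WO q V = W 2 q V := by
  have hV1 : 1 ≤ V := by
    rcases Nat.eq_zero_or_pos V with h | h
    · exact absurd (h ▸ (⟨0, rfl⟩ : 2 ∣ (0:ℕ))) hV
    · exact h
  have e1 := A1 hq hV1
  have e3 := A3 hq hq2 hV1
  have e2 := A2 hq hq2 hV1
  rw [if_neg hV] at e2
  omega

/-- key lemma: Wstar(qV) = Wstar(qV - 2) + W(V) -/
lemma A5 (hq : 1 < q) (hq2 : Nat.Coprime 2 q) :
    ∀ V : ℕ, 1 ≤ V → Wstar 2 q (q * V) = Wstar 2 q (q * V - 2) + W 2 q V := by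
  intro V
  induction V using Nat.strong_induction_on with
  | _ V ih =>
    intro hV
    have hq3 : 3 ≤ q := by
      have := q_odd hq hq2
      omega
    have hgeq : q ≤ q * V := Nat.le_mul_of_pos_right q (by omega)
    have hqV1 : 1 ≤ q * V := by omega
    by_cases h2 : 2 ∣ V
    · -- even case
      obtain ⟨V', rfl⟩ := h2
      have hV' : 1 ≤ V' := by omega
      have hgeq' : q ≤ q * V' := Nat.le_mul_of_pos_right q (by omega)
      have hqe : q * (2 * V') = 2 * (q * V') := by ring
      -- e2a : Wstar (q * (2*V')) = W (q*V') + WO (2*V')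
      have e2a := A2 hq hq2 hqV1
      rw [if_pos (show 2 ∣ q * (2 * V') from ⟨q * V', hqe⟩),
        if_pos (show q ∣ q * (2 * V') from ⟨2 * V', rfl⟩),
        show q * (2 * V') / 2 = q * V' from by rw [hqe, Nat.mul_div_cancel_left _ two_pos],
        Nat.mul_div_cancel_left _ (by omega : 0 < q)] at e2a
      -- e2b : Wstar (q * (2*V') - 2) = W (q*V' - 1)
      have e2b := A2 hq hq2 (show 1 ≤ q * (2 * V') - 2 from by omega)
      rw [if_pos (show 2 ∣ q * (2 * V') - 2 from ⟨q * V' - 1, by omega⟩),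
        if_neg (not_q_dvd_sub_two hq hq2 (by omega : 1 ≤ 2 * V')),
        show (q * (2 * V') - 2) / 2 = q * V' - 1 from by omega] at e2b
      -- e1a : W (2*V') = Wstar (2*V' - 1) + Wstar (2*V')
      have e1a := A1 hq (show 1 ≤ 2 * V' from by omega)
      -- e3V : WO (2*V') = Wstar (2*V' - 1) + X
      have e3V := A3 hq hq2 (show 1 ≤ 2 * V' from by omega)
      -- e2V : Wstar (2*V') = W V' + X
      have e2V := A2 hq hq2 (show 1 ≤ 2 * V' from by omega)
      rw [if_pos (show 2 ∣ 2 * V' from ⟨V', rfl⟩),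
        Nat.mul_div_cancel_left _ two_pos] at e2V
      -- e1c : W (q*V') = Wstar (q*V' - 1) + Wstar (q*V')
      have e1c := A1 hq (show 1 ≤ q * V' from by omega)
      -- e1d : W (q*V' - 1) = Wstar (q*V' - 2) + Wstar (q*V' - 1)
      have e1d := A1 hq (show 1 ≤ q * V' - 1 from by omega)
      rw [show q * V' - 1 - 1 = q * V' - 2 from by omega] at e1d
      have ihS := ih V' (by omega) hV'
      omega
    · -- odd case
      have hoddqV : ¬ 2 ∣ q * V := not_two_dvd_mul hq hq2 h2
      have e2a := A2 hq hq2 hqV1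
      rw [if_neg hoddqV, if_pos (show q ∣ q * V from ⟨V, rfl⟩),
        Nat.mul_div_cancel_left _ (by omega : 0 < q)] at e2a
      have e2b := A2 hq hq2 (show 1 ≤ q * V - 2 from by omega)
      rw [if_neg (show ¬ 2 ∣ q * V - 2 from by omega),
        if_neg (not_q_dvd_sub_two hq hq2 hV)] at e2b
      have e4 := A4 hq hq2 h2
      omega

end SCAux


open SCAux

theorem W_qU_add_one_p_eq_two (q : ℕ) (hq : 1 < q) (hq2 : Nat.Coprime 2 q)
    (U : ℕ) (hU : 1 ≤ U) :
    (Even U → W 2 q (q * U + 1) = W 2 q U + W 2 q (q * U / 2 - 1)) ∧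
    (Odd U → W 2 q (q * U + 1) = W 2 q U + W 2 q ((q * U + 1) / 2)) := by
  have hq3 : 3 ≤ q := by
    have := q_odd hq hq2
    omega
  constructor
  · intro hEven
    obtain ⟨V, rfl⟩ : 2 ∣ U := hEven.two_dvd
    have hV : 1 ≤ V := by omega
    have hgeq : q ≤ q * V := Nat.le_mul_of_pos_right q (by omega)
    have hqe : q * (2 * V) = 2 * (q * V) := by ring
    have hdiv : q * (2 * V) / 2 = q * V := by rw [hqe, Nat.mul_div_cancel_left _ two_pos]
    rw [hdiv]
    -- e1 : W (q*(2V)+1) = Wstar (q*(2V)) + Wstar (q*(2V)+1)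
    have e1 := A1 hq (show 1 ≤ q * (2 * V) + 1 from by omega)
    rw [Nat.add_sub_cancel] at e1
    -- e2b : Wstar (q*(2V)+1) = 0
    have e2b := A2 hq hq2 (show 1 ≤ q * (2 * V) + 1 from by omega)
    rw [if_neg (show ¬ 2 ∣ q * (2 * V) + 1 from by omega),
      if_neg (not_q_dvd_succ hq)] at e2b
    -- e2a : Wstar (q*(2V)) = W (q*V) + WO (2*V)
    have e2a := A2 hq hq2 (show 1 ≤ q * (2 * V) from by omega)
    rw [if_pos (show 2 ∣ q * (2 * V) from ⟨q * V, hqe⟩),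
      if_pos (show q ∣ q * (2 * V) from ⟨2 * V, rfl⟩), hdiv,
      Nat.mul_div_cancel_left _ (by omega : 0 < q)] at e2a
    have e1a := A1 hq (show 1 ≤ 2 * V from by omega)
    have e3V := A3 hq hq2 (show 1 ≤ 2 * V from by omega)
    have e2V := A2 hq hq2 (show 1 ≤ 2 * V from by omega)
    rw [if_pos (show 2 ∣ 2 * V from ⟨V, rfl⟩), Nat.mul_div_cancel_left _ two_pos] at e2V
    have e1c := A1 hq (show 1 ≤ q * V from by omega)
    have e1d := A1 hq (show 1 ≤ q * V - 1 from by omega)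
    rw [show q * V - 1 - 1 = q * V - 2 from by omega] at e1d
    have ihS := A5 hq hq2 V hV
    omega
  · intro hOdd
    have hUodd : ¬ 2 ∣ U := by
      have := Nat.odd_iff.mp hOdd
      omega
    have hoddqU : ¬ 2 ∣ q * U := not_two_dvd_mul hq hq2 hUodd
    have hgeq : q ≤ q * U := Nat.le_mul_of_pos_right q (by omega)
    have e1 := A1 hq (show 1 ≤ q * U + 1 from by omega)
    rw [Nat.add_sub_cancel] at e1
    have e2a := A2 hq hq2 (show 1 ≤ q * U from by omega)
    rw [if_neg hoddqU, if_pos (show q ∣ q * U from ⟨U, rfl⟩),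
      Nat.mul_div_cancel_left _ (by omega : 0 < q)] at e2a
    have e2b := A2 hq hq2 (show 1 ≤ q * U + 1 from by omega)
    rw [if_pos (show 2 ∣ q * U + 1 from by omega),
      if_neg (not_q_dvd_succ hq)] at e2b
    have e4 := A4 hq hq2 hUodd
    omega
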